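/- Let n be an odd positive integer and let α₁, α₂, α₃ be integers satisfying conditions (2.9). Define C : (ZMod n)³ → ZMod n by C(i,j,k) = α₁·i + α₂·j + α₃·k. Then C is a pandiagonal Latin cube: for every direction vector d = (d₁,d₂,d₃) with each dᵢ ∈ {−1,0,1} and d ≠ (0,0,0), and every point p ∈ (ZMod n)³, the map t ↦ C(p + t·d) is a bijection of ZMod n. -/

import Mathlib

/-- Conditions (2.9) on the parameters `α₁, α₂, α₃` of a linear cube modulo `n`,
with `A = α₁ + α₂ + α₃`. -/
def Cond29 (n : ℕ) (α₁ α₂ α₃ : ℤ) : Prop :=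
  Int.gcd α₁ n = 1 ∧ Int.gcd α₂ n = 1 ∧ Int.gcd α₃ n = 1 ∧
  Int.gcd (α₁ + α₂) n = 1 ∧ Int.gcd (α₁ + α₃) n = 1 ∧ Int.gcd (α₂ + α₃) n = 1 ∧
  Int.gcd (α₁ - α₂) n = 1 ∧ Int.gcd (α₁ - α₃) n = 1 ∧ Int.gcd (α₂ - α₃) n = 1 ∧
  Int.gcd (α₁ + α₂ + α₃) n = 1 ∧
  Int.gcd (α₁ + α₂ + α₃ - 2 * α₁) n = 1 ∧
  Int.gcd (α₁ + α₂ + α₃ - 2 * α₂) n = 1 ∧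
  Int.gcd (α₁ + α₂ + α₃ - 2 * α₃) n = 1

lemma isUnit_intCast_of_gcd {n : ℕ} {a : ℤ} (h : Int.gcd a n = 1) :
    IsUnit ((a : ZMod n)) := by
  obtain ⟨u, v, huv⟩ := Int.isCoprime_iff_gcd_eq_one.mpr h
  refine IsUnit.of_mul_eq_one ((u : ZMod n)) ?_
  have : ((u * a + v * n : ℤ) : ZMod n) = ((1 : ℤ) : ZMod n) := by rw [huv]
  push_cast at this
  simp [ZMod.natCast_self] at this
  linear_combination this

lemma bijective_affine {n : ℕ} [NeZero n] (c m : ZMod n) (hm : IsUnit m) :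
    Function.Bijective (fun t : ZMod n => c + t * m) := by
  rw [Finite.injective_iff_bijective.symm]
  intro t s hts
  simp only at hts
  have := add_left_cancel hts
  exact hm.mul_left_cancel (by rw [mul_comm t, mul_comm s] at this; exact this)

/-- **Theorem 2.5.** For odd `n` and `α₁, α₂, α₃` satisfying
conditions (2.9), the cube `C(i,j,k) = α₁i + α₂j + α₃k` is a pandiagonal Latin cube:
along every line with direction a nonzero vector in `{-1,0,1}³`, the values of `C`
form a bijection of `ZMod n`. -/
theorem linear_cube_is_pandiagonal_latin
    (n : ℕ) (hodd : Odd n) (α₁ α₂ α₃ : ℤ) (h : Cond29 n α₁ α₂ α₃) :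
    ∀ d₁ d₂ d₃ : ZMod n,
      d₁ ∈ ({-1, 0, 1} : Set (ZMod n)) →
      d₂ ∈ ({-1, 0, 1} : Set (ZMod n)) →
      d₃ ∈ ({-1, 0, 1} : Set (ZMod n)) →
      ¬ (d₁ = 0 ∧ d₂ = 0 ∧ d₃ = 0) →
      ∀ p₁ p₂ p₃ : ZMod n,
        Function.Bijective (fun t : ZMod n =>
          (α₁ : ZMod n) * (p₁ + t * d₁) + (α₂ : ZMod n) * (p₂ + t * d₂) +
            (α₃ : ZMod n) * (p₃ + t * d₃)) := by
  have hn : NeZero n := ⟨hodd.pos.ne'⟩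
  obtain ⟨h1, h2, h3, h12, h13, h23, hm12, hm13, hm23, hA, hA1, hA2, hA3⟩ := h
  intro d₁ d₂ d₃ hd₁ hd₂ hd₃ hne p₁ p₂ p₃
  have key : ∀ m : ZMod n, IsUnit m →
      (α₁ : ZMod n) * d₁ + (α₂ : ZMod n) * d₂ + (α₃ : ZMod n) * d₃ = m →
      Function.Bijective (fun t : ZMod n =>
        (α₁ : ZMod n) * (p₁ + t * d₁) + (α₂ : ZMod n) * (p₂ + t * d₂) +
          (α₃ : ZMod n) * (p₃ + t * d₃)) := by
    intro m hm hmeq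
    have := bijective_affine ((α₁ : ZMod n) * p₁ + (α₂ : ZMod n) * p₂ + (α₃ : ZMod n) * p₃) m hm
    convert this using 2 with t
    rw [← hmeq]; ring
  have U : ∀ a : ℤ, Int.gcd a n = 1 → IsUnit ((a : ZMod n)) := fun a ha =>
    isUnit_intCast_of_gcd ha
  rcases hd₁ with rfl | rfl | rfl <;> rcases hd₂ with rfl | rfl | rfl <;>
    rcases hd₃ with rfl | rfl | rfl
  · exact key _ ((U _ hA).neg) (by push_cast; ring)
  · exact key _ ((U _ h12).neg) (by push_cast; ring)
  · exact key _ ((U _ hA3).neg) (by push_cast; ring)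
  · exact key _ ((U _ h13).neg) (by push_cast; ring)
  · exact key _ ((U _ h1).neg) (by push_cast; ring)
  · exact key _ (U _ hm13).neg (by push_cast; ring)
  · exact key _ ((U _ hA2).neg) (by push_cast; ring)
  · exact key _ (U _ hm12).neg (by push_cast; ring)
  · exact key _ (U _ hA1) (by push_cast; ring)
  · exact key _ ((U _ h23).neg) (by push_cast; ring)
  · exact key _ ((U _ h2).neg) (by push_cast; ring)
  · exact key _ (U _ hm23).neg (by push_cast; ring)
  · exact key _ ((U _ h3).neg) (by push_cast; ring)
  · exact absurd ⟨rfl, rfl, rfl⟩ hne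
  · exact key _ (U _ h3) (by push_cast; ring)
  · exact key _ (U _ hm23) (by push_cast; ring)
  · exact key _ (U _ h2) (by push_cast; ring)
  · exact key _ (U _ h23) (by push_cast; ring)
  · exact key _ (U _ hA1).neg (by push_cast; ring)
  · exact key _ (U _ hm12) (by push_cast; ring)
  · exact key _ (U _ hA2) (by push_cast; ring)
  · exact key _ (U _ hm13) (by push_cast; ring)
  · exact key _ (U _ h1) (by push_cast; ring)
  · exact key _ (U _ h13) (by push_cast; ring)
  · exact key _ (U _ hA3) (by push_cast; ring)
  · exact key _ (U _ h12) (by push_cast; ring)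
  · exact key _ (U _ hA) (by push_cast; ring)
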